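/- Rooted divergence-preserving branching bisimilarity is a congruence with respect to the communication-enforcing parallel composition: if P1 ⇆Δ Q1 and P2 ⇆Δ Q2, then [P1 ∥ P2]_C' ⇆Δ [Q1 ∥ Q2]_C' for any set of channels C'. -/

import Mathlib

namespace TCPRev

/-- Actions: receive `c?d`, send `c!d`, and the internal action `τ`. -/
inductive Act (C D : Type) : Type
  | recv : C → D → Act C D
  | send : C → D → Act C D
  | tau : Act C D

/-- `a ∈ I_C'`: the communication actions over channels in `Cs`. -/
def Act.inIC {C D : Type} (Cs : Set C) : Act C D → Prop
  | .recv c _ => c ∈ Cs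
  | .send c _ => c ∈ Cs
  | .tau => False

/-- Process expressions of TCP• (with iteration and nesting). -/
inductive Proc (C D : Type) : Type
  | zero : Proc C D
  | one : Proc C D
  | act : Act C D → Proc C D → Proc C D
  | seq : Proc C D → Proc C D → Proc C D
  | alt : Proc C D → Proc C D → Proc C D
  | par : Set C → Proc C D → Proc C D → Proc C D
  | star : Proc C D → Proc C D
  | nest : Proc C D → Proc C D → Proc C D

variable {C D : Type}

/-- Termination predicate `P ↓`. -/
def Proc.term : Proc C D → Prop
  | .zero => False
  | .one => True
  | .act _ _ => False
  | .seq p q => p.term ∧ q.term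
  | .alt p q => p.term ∨ q.term
  | .par _ p q => p.term ∧ q.term
  | .star _ => True
  | .nest _ q => q.term

/-- The transition relation of TCP• under the revised operational semantics of
sequential composition: `P₁ • P₂` may only move in its second component when
`P₁ ↓` and `P₁` has no outgoing transitions. -/
def Tr : Proc C D → Act C D → Proc C D → Prop
  | .zero, _, _ => False
  | .one, _, _ => False
  | .act a p, b, r => b = a ∧ r = p
  | .alt p q, a, r => Tr p a r ∨ Tr q a r
  | .seq p q, a, r =>
      (∃ p', Tr p a p' ∧ r = .seq p' q) ∨
      (p.term ∧ (∀ b p', ¬ Tr p b p') ∧ Tr q a r)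
  | .par Cs p q, a, r =>
      (∃ p', Tr p a p' ∧ ¬ a.inIC Cs ∧ r = .par Cs p' q) ∨
      (∃ q', Tr q a q' ∧ ¬ a.inIC Cs ∧ r = .par Cs p q') ∨
      (a = .tau ∧ ∃ c ∈ Cs, ∃ d p' q',
        ((Tr p (.recv c d) p' ∧ Tr q (.send c d) q') ∨
         (Tr p (.send c d) p' ∧ Tr q (.recv c d) q')) ∧ r = .par Cs p' q')
  | .star p, a, r => ∃ p', Tr p a p' ∧ r = .seq p' (.star p)
  | .nest p q, a, r =>
      (∃ p', Tr p a p' ∧ r = .seq p' (.seq (.nest p q) p)) ∨ Tr q a r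

/-- τ-steps. -/
def TauStep (p q : Proc C D) : Prop := Tr p .tau q

/-- Reflexive-transitive closure of τ-steps. -/
def TauReach : Proc C D → Proc C D → Prop := Relation.ReflTransGen TauStep

/-- `p →(a) q`. -/
def OptStep (p : Proc C D) (a : Act C D) (q : Proc C D) : Prop :=
  Tr p a q ∨ (a = .tau ∧ p = q)

/-- A symmetric relation `R` is a branching bisimulation. -/
def IsBranchingBisim (R : Proc C D → Proc C D → Prop) : Prop :=
  Symmetric R ∧ ∀ p q, R p q →
    (∀ a p', Tr p a p' →
      ∃ q'' q', TauReach q q'' ∧ OptStep q'' a q' ∧ R p q'' ∧ R p' q') ∧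
    (p.term → ∃ q', TauReach q q' ∧ q'.term)

/-- The divergence-preservation condition for a relation `R`. -/
def DivPres (R : Proc C D → Proc C D → Prop) : Prop :=
  ∀ p q, R p q → ∀ f : ℕ → Proc C D, f 0 = p →
    (∀ i, TauStep (f i) (f (i + 1))) → (∀ i, R (f i) q) →
    ∃ q', Relation.TransGen TauStep q q' ∧ ∃ i, R (f i) q'

/-- Divergence-preserving branching bisimulation. -/
def IsDPBranchingBisim (R : Proc C D → Proc C D → Prop) : Prop :=
  IsBranchingBisim R ∧ DivPres R

/-- The rootedness condition of `R` on the pair `(p, q)`. -/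
def RootedOn (R : Proc C D → Proc C D → Prop) (p q : Proc C D) : Prop :=
  (∀ a p', Tr p a p' → ∃ q', Tr q a q' ∧ R p' q') ∧
  (∀ a q', Tr q a q' → ∃ p', Tr p a p' ∧ R p' q') ∧
  (p.term ↔ q.term)

/-- Rooted divergence-preserving branching bisimilarity `⇆Δ`. -/
def RDPBBisimilar (p q : Proc C D) : Prop :=
  ∃ R, IsDPBranchingBisim R ∧ R p q ∧ RootedOn R p q


section Aux

variable {Cs : Set C}

lemma tau_not_inIC : ¬ (Act.tau : Act C D).inIC Cs := fun h => h

lemma tr_par_left {a a' b : Proc C D} {α : Act C D} (h : Tr a α a') (hni : ¬ α.inIC Cs) :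
    Tr (.par Cs a b) α (.par Cs a' b) := by
  simp only [Tr]; exact Or.inl ⟨a', h, hni, rfl⟩

lemma tr_par_right {a b b' : Proc C D} {α : Act C D} (h : Tr b α b') (hni : ¬ α.inIC Cs) :
    Tr (.par Cs a b) α (.par Cs a b') := by
  simp only [Tr]; exact Or.inr (Or.inl ⟨b', h, hni, rfl⟩)

lemma tauReach_par_left {a a' b : Proc C D} (h : TauReach a a') :
    TauReach (.par Cs a b) (.par Cs a' b) := by
  induction h with
  | refl => exact Relation.ReflTransGen.refl
  | tail _ st ih => exact ih.tail (tr_par_left st tau_not_inIC)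

lemma tauReach_par_right {a b b' : Proc C D} (h : TauReach b b') :
    TauReach (.par Cs a b) (.par Cs a b') := by
  induction h with
  | refl => exact Relation.ReflTransGen.refl
  | tail _ st ih => exact ih.tail (tr_par_right st tau_not_inIC)

lemma transGen_par_left {a a' b : Proc C D} (h : Relation.TransGen TauStep a a') :
    Relation.TransGen TauStep (.par Cs a b) (.par Cs a' b) := by
  induction h with
  | single st => exact Relation.TransGen.single (tr_par_left st tau_not_inIC)
  | tail _ st ih => exact ih.tail (tr_par_left st tau_not_inIC)

lemma transGen_par_right {a b b' : Proc C D} (h : Relation.TransGen TauStep b b') :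
    Relation.TransGen TauStep (.par Cs a b) (.par Cs a b') := by
  induction h with
  | single st => exact Relation.TransGen.single (tr_par_right st tau_not_inIC)
  | tail _ st ih => exact ih.tail (tr_par_right st tau_not_inIC)

lemma optStep_of_ne_tau {p q : Proc C D} {α : Act C D} (h : OptStep p α q)
    (hα : α ≠ .tau) : Tr p α q := by
  rcases h with h | ⟨rfl, rfl⟩
  · exact h
  · exact absurd rfl hα

/-- The product relation used to witness congruence for parallel composition. -/
def ParRel (Cs : Set C) (R1 R2 : Proc C D → Proc C D → Prop) :
    Proc C D → Proc C D → Prop :=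
  fun x y => ∃ a b c d, R1 a c ∧ R2 b d ∧ x = .par Cs a b ∧ y = .par Cs c d

lemma parRel_bisim {R1 R2 : Proc C D → Proc C D → Prop}
    (h1 : IsBranchingBisim R1) (h2 : IsBranchingBisim R2) :
    IsBranchingBisim (ParRel Cs R1 R2) := by
  constructor
  · rintro x y ⟨a, b, c, d, r1, r2, rfl, rfl⟩
    exact ⟨c, d, a, b, h1.1 r1, h2.1 r2, rfl, rfl⟩
  · rintro x y ⟨a, b, c, d, r1, r2, rfl, rfl⟩
    constructor
    · intro α r htr
      simp only [Tr] at htr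
      rcases htr with ⟨a', ha, hni, rfl⟩ | ⟨b', hb, hni, rfl⟩ |
        ⟨rfl, ch, hch, dd, a', b', hcase, rfl⟩
      · obtain ⟨c'', c', hre, hopt, hc1, hc2⟩ := (h1.2 a c r1).1 α a' ha
        refine ⟨.par Cs c'' d, .par Cs c' d, tauReach_par_left hre, ?_,
          ⟨a, b, c'', d, hc1, r2, rfl, rfl⟩, ⟨a', b, c', d, hc2, r2, rfl, rfl⟩⟩
        rcases hopt with h | ⟨rfl, rfl⟩
        · exact Or.inl (tr_par_left h hni)
        · exact Or.inr ⟨rfl, rfl⟩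
      · obtain ⟨d'', d', hre, hopt, hd1, hd2⟩ := (h2.2 b d r2).1 α b' hb
        refine ⟨.par Cs c d'', .par Cs c d', tauReach_par_right hre, ?_,
          ⟨a, b, c, d'', r1, hd1, rfl, rfl⟩, ⟨a, b', c, d', r1, hd2, rfl, rfl⟩⟩
        rcases hopt with h | ⟨rfl, rfl⟩
        · exact Or.inl (tr_par_right h hni)
        · exact Or.inr ⟨rfl, rfl⟩
      · rcases hcase with ⟨ha, hb⟩ | ⟨ha, hb⟩
        · obtain ⟨c'', c', hrec, hoptc, hc1, hc2⟩ := (h1.2 a c r1).1 _ a' ha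
          obtain ⟨d'', d', hred, hoptd, hd1, hd2⟩ := (h2.2 b d r2).1 _ b' hb
          have hc : Tr c'' (.recv ch dd) c' :=
            optStep_of_ne_tau hoptc (fun h => by cases h)
          have hd : Tr d'' (.send ch dd) d' :=
            optStep_of_ne_tau hoptd (fun h => by cases h)
          refine ⟨.par Cs c'' d'', .par Cs c' d',
            (tauReach_par_left hrec).trans (tauReach_par_right hred), Or.inl ?_,
            ⟨a, b, c'', d'', hc1, hd1, rfl, rfl⟩, ⟨a', b', c', d', hc2, hd2, rfl, rfl⟩⟩
          simp only [Tr]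
          exact Or.inr (Or.inr ⟨True.intro, ch, hch, dd, c', d', Or.inl ⟨hc, hd⟩, rfl⟩)
        · obtain ⟨c'', c', hrec, hoptc, hc1, hc2⟩ := (h1.2 a c r1).1 _ a' ha
          obtain ⟨d'', d', hred, hoptd, hd1, hd2⟩ := (h2.2 b d r2).1 _ b' hb
          have hc : Tr c'' (.send ch dd) c' :=
            optStep_of_ne_tau hoptc (fun h => by cases h)
          have hd : Tr d'' (.recv ch dd) d' :=
            optStep_of_ne_tau hoptd (fun h => by cases h)
          refine ⟨.par Cs c'' d'', .par Cs c' d',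
            (tauReach_par_left hrec).trans (tauReach_par_right hred), Or.inl ?_,
            ⟨a, b, c'', d'', hc1, hd1, rfl, rfl⟩, ⟨a', b', c', d', hc2, hd2, rfl, rfl⟩⟩
          simp only [Tr]
          exact Or.inr (Or.inr ⟨True.intro, ch, hch, dd, c', d', Or.inr ⟨hc, hd⟩, rfl⟩)
    · rintro ⟨hta, htb⟩
      obtain ⟨c', hrc, htc⟩ := (h1.2 a c r1).2 hta
      obtain ⟨d', hrd, htd⟩ := (h2.2 b d r2).2 htb
      exact ⟨.par Cs c' d', (tauReach_par_left hrc).trans (tauReach_par_right hrd),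
        htc, htd⟩

lemma parRel_divPres {R1 R2 : Proc C D → Proc C D → Prop}
    (h1 : IsDPBranchingBisim R1) (h2 : IsDPBranchingBisim R2) :
    DivPres (ParRel Cs R1 R2) := by
  classical
  rintro p q ⟨a0, b0, c, d, _, _, hp0, rfl⟩ f hf0 hstep hrel
  -- extract components of every `f i`
  have hcomp : ∀ i, ∃ a b, f i = .par Cs a b ∧ R1 a c ∧ R2 b d := by
    intro i
    obtain ⟨a, b, c', d', r1, r2, hfi, hq⟩ := hrel i
    simp only [Proc.par.injEq] at hq
    obtain ⟨-, rfl, rfl⟩ := hq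
    exact ⟨a, b, hfi, r1, r2⟩
  choose A B hf hAc hBd using hcomp
  have hstep' : ∀ i, Tr (Proc.par Cs (A i) (B i)) .tau (.par Cs (A (i+1)) (B (i+1))) := by
    intro i
    have := hstep i
    rw [TauStep, hf i, hf (i+1)] at this
    exact this
  -- classify each step
  set L : ℕ → Prop := fun i => Tr (A i) .tau (A (i+1)) ∧ B (i+1) = B i with hL
  set Rt : ℕ → Prop := fun i => Tr (B i) .tau (B (i+1)) ∧ A (i+1) = A i with hRt
  set Cm : ℕ → Prop := fun i => ∃ ch ∈ Cs, ∃ dd,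
      (Tr (A i) (.recv ch dd) (A (i+1)) ∧ Tr (B i) (.send ch dd) (B (i+1))) ∨
      (Tr (A i) (.send ch dd) (A (i+1)) ∧ Tr (B i) (.recv ch dd) (B (i+1))) with hCm
  have hcases : ∀ i, L i ∨ Rt i ∨ Cm i := by
    intro i
    have h := hstep' i
    simp only [Tr] at h
    rcases h with ⟨a', ha, -, heq⟩ | ⟨b', hb, -, heq⟩ |
      ⟨-, ch, hch, dd, a', b', hcase, heq⟩
    · simp only [Proc.par.injEq] at heq
      obtain ⟨-, h1', h2'⟩ := heq
      exact Or.inl ⟨h1' ▸ ha, h2'⟩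
    · simp only [Proc.par.injEq] at heq
      obtain ⟨-, h1', h2'⟩ := heq
      exact Or.inr (Or.inl ⟨h2' ▸ hb, h1'⟩)
    · simp only [Proc.par.injEq] at heq
      obtain ⟨-, h1', h2'⟩ := heq
      exact Or.inr (Or.inr ⟨ch, hch, dd, h1' ▸ h2' ▸ hcase⟩)
  by_cases hc : ∃ i, Cm i
  · -- a communication step is matched by a communication step of `q`
    obtain ⟨i, ch, hch, dd, hcase⟩ := hc
    rcases hcase with ⟨ha, hb⟩ | ⟨ha, hb⟩
    · obtain ⟨c'', c', hrec, hoptc, -, hc2⟩ := (h1.1.2 _ c (hAc i)).1 _ _ ha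
      obtain ⟨d'', d', hred, hoptd, -, hd2⟩ := (h2.1.2 _ d (hBd i)).1 _ _ hb
      have hcstep : Tr c'' (.recv ch dd) c' :=
        optStep_of_ne_tau hoptc (fun h => by cases h)
      have hdstep : Tr d'' (.send ch dd) d' :=
        optStep_of_ne_tau hoptd (fun h => by cases h)
      have hcomm : TauStep (Proc.par Cs c'' d'') (.par Cs c' d') := by
        simp only [TauStep, Tr]
        exact Or.inr (Or.inr ⟨True.intro, ch, hch, dd, c', d', Or.inl ⟨hcstep, hdstep⟩, rfl⟩)
      refine ⟨.par Cs c' d', Relation.TransGen.tail'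
        ((tauReach_par_left hrec).trans (tauReach_par_right hred)) hcomm, i + 1, ?_⟩
      exact ⟨A (i+1), B (i+1), c', d', hc2, hd2, hf (i+1), rfl⟩
    · obtain ⟨c'', c', hrec, hoptc, -, hc2⟩ := (h1.1.2 _ c (hAc i)).1 _ _ ha
      obtain ⟨d'', d', hred, hoptd, -, hd2⟩ := (h2.1.2 _ d (hBd i)).1 _ _ hb
      have hcstep : Tr c'' (.send ch dd) c' :=
        optStep_of_ne_tau hoptc (fun h => by cases h)
      have hdstep : Tr d'' (.recv ch dd) d' :=
        optStep_of_ne_tau hoptd (fun h => by cases h)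
      have hcomm : TauStep (Proc.par Cs c'' d'') (.par Cs c' d') := by
        simp only [TauStep, Tr]
        exact Or.inr (Or.inr ⟨True.intro, ch, hch, dd, c', d', Or.inr ⟨hcstep, hdstep⟩, rfl⟩)
      refine ⟨.par Cs c' d', Relation.TransGen.tail'
        ((tauReach_par_left hrec).trans (tauReach_par_right hred)) hcomm, i + 1, ?_⟩
      exact ⟨A (i+1), B (i+1), c', d', hc2, hd2, hf (i+1), rfl⟩
  · push_neg at hc
    have hLR : ∀ i, L i ∨ Rt i := by
      intro i
      rcases hcases i with h | h | h
      · exact Or.inl h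
      · exact Or.inr h
      · exact absurd h (hc i)
    by_cases hev : ∃ n, ∀ m, n ≤ m → Rt m
    · -- eventually only right steps: diverge in the second component
      obtain ⟨n, hn⟩ := hev
      obtain ⟨d', htrans, k, hk⟩ := h2.2 (B n) d (hBd n) (fun k => B (n + k)) rfl
        (fun k => (hn (n + k) (Nat.le_add_right n k)).1)
        (fun k => hBd (n + k))
      exact ⟨.par Cs c d', transGen_par_right htrans, n + k,
        ⟨A (n + k), B (n + k), c, d', hAc (n + k), hk, hf (n + k), rfl⟩⟩
    · -- infinitely many left steps: extract the subsequence of left steps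
      push_neg at hev
      have hl : ∀ n, ∃ m, n ≤ m ∧ L m := by
        intro n
        obtain ⟨m, hnm, hm⟩ := hev n
        rcases hLR m with h | h
        · exact ⟨m, hnm, h⟩
        · exact absurd h hm
      -- A is constant over stretches without left steps
      have hconst : ∀ n s, (∀ j, s ≤ j → j < s + n → ¬ L j) → A (s + n) = A s := by
        intro n
        induction n with
        | zero => intro s _; rfl
        | succ n ih =>
          intro s hno
          have hrt : Rt (s + n) := by
            rcases hLR (s + n) with h | h
            · exact absurd h (hno (s + n) (Nat.le_add_right s n) (by omega))
            · exact h
          have h1' : A (s + n + 1) = A (s + n) := hrt.2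
          have h2' : A (s + n) = A s := ih s (fun j hj1 hj2 => hno j hj1 (by omega))
          calc A (s + (n + 1)) = A (s + n + 1) := by rw [Nat.add_succ]
            _ = A s := by rw [h1', h2']
      let idx : ℕ → ℕ := fun k =>
        Nat.rec (Nat.find (hl 0)) (fun _ prev => Nat.find (hl (prev + 1))) k
      have hidxL : ∀ k, L (idx k) := by
        intro k
        cases k with
        | zero => exact (Nat.find_spec (hl 0)).2
        | succ k => exact (Nat.find_spec (hl (idx k + 1))).2
      have hchain : ∀ k, TauStep (A (idx k)) (A (idx (k + 1))) := by
        intro k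
        have hge : idx k + 1 ≤ idx (k + 1) := (Nat.find_spec (hl (idx k + 1))).1
        have hAeq : A (idx (k + 1)) = A (idx k + 1) := by
          have hn : idx (k + 1) = (idx k + 1) + (idx (k + 1) - (idx k + 1)) := by omega
          rw [hn]
          refine hconst _ _ (fun j hj1 hj2 hLj => ?_)
          have hjlt : j < idx (k + 1) := by omega
          exact Nat.find_min (hl (idx k + 1)) hjlt ⟨hj1, hLj⟩
        rw [hAeq]
        exact (hidxL k).1
      obtain ⟨c', htrans, k, hk⟩ := h1.2 (A (idx 0)) c (hAc (idx 0))
        (fun k => A (idx k)) rfl hchain (fun k => hAc (idx k))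
      exact ⟨.par Cs c' d, transGen_par_left htrans, idx k,
        ⟨A (idx k), B (idx k), c', d, hk, hBd (idx k), hf (idx k), rfl⟩⟩

end Aux

/-- Rooted divergence-preserving branching bisimilarity is a congruence with
respect to the communication-enforcing parallel composition. -/
theorem rdpbb_congr_par {C D : Type} (Cs : Set C) (p₁ p₂ q₁ q₂ : Proc C D)
    (h₁ : RDPBBisimilar p₁ q₁) (h₂ : RDPBBisimilar p₂ q₂) :
    RDPBBisimilar (.par Cs p₁ p₂) (.par Cs q₁ q₂) := by
  obtain ⟨R1, hB1, hr1, hroot1⟩ := h₁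
  obtain ⟨R2, hB2, hr2, hroot2⟩ := h₂
  refine ⟨ParRel Cs R1 R2, ⟨parRel_bisim hB1.1 hB2.1, parRel_divPres hB1 hB2⟩,
    ⟨p₁, p₂, q₁, q₂, hr1, hr2, rfl, rfl⟩, ?_, ?_, ?_⟩
  · -- root condition: forward
    intro α r htr
    simp only [Tr] at htr
    rcases htr with ⟨p₁', h, hni, rfl⟩ | ⟨p₂', h, hni, rfl⟩ |
      ⟨rfl, ch, hch, dd, p₁', p₂', hcase, rfl⟩
    · obtain ⟨q₁', hq, hrel⟩ := hroot1.1 α p₁' h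
      exact ⟨.par Cs q₁' q₂, tr_par_left hq hni, p₁', p₂, q₁', q₂, hrel, hr2, rfl, rfl⟩
    · obtain ⟨q₂', hq, hrel⟩ := hroot2.1 α p₂' h
      exact ⟨.par Cs q₁ q₂', tr_par_right hq hni, p₁, p₂', q₁, q₂', hr1, hrel, rfl, rfl⟩
    · rcases hcase with ⟨ha, hb⟩ | ⟨ha, hb⟩
      · obtain ⟨q₁', hq1, hrel1⟩ := hroot1.1 _ p₁' ha
        obtain ⟨q₂', hq2, hrel2⟩ := hroot2.1 _ p₂' hb
        refine ⟨.par Cs q₁' q₂', ?_, p₁', p₂', q₁', q₂', hrel1, hrel2, rfl, rfl⟩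
        simp only [Tr]
        exact Or.inr (Or.inr ⟨True.intro, ch, hch, dd, q₁', q₂', Or.inl ⟨hq1, hq2⟩, rfl⟩)
      · obtain ⟨q₁', hq1, hrel1⟩ := hroot1.1 _ p₁' ha
        obtain ⟨q₂', hq2, hrel2⟩ := hroot2.1 _ p₂' hb
        refine ⟨.par Cs q₁' q₂', ?_, p₁', p₂', q₁', q₂', hrel1, hrel2, rfl, rfl⟩
        simp only [Tr]
        exact Or.inr (Or.inr ⟨True.intro, ch, hch, dd, q₁', q₂', Or.inr ⟨hq1, hq2⟩, rfl⟩)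
  · -- root condition: backward
    intro α r htr
    simp only [Tr] at htr
    rcases htr with ⟨q₁', h, hni, rfl⟩ | ⟨q₂', h, hni, rfl⟩ |
      ⟨rfl, ch, hch, dd, q₁', q₂', hcase, rfl⟩
    · obtain ⟨p₁', hp, hrel⟩ := hroot1.2.1 α q₁' h
      exact ⟨.par Cs p₁' p₂, tr_par_left hp hni, p₁', p₂, q₁', q₂, hrel, hr2, rfl, rfl⟩
    · obtain ⟨p₂', hp, hrel⟩ := hroot2.2.1 α q₂' h
      exact ⟨.par Cs p₁ p₂', tr_par_right hp hni, p₁, p₂', q₁, q₂', hr1, hrel, rfl, rfl⟩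
    · rcases hcase with ⟨ha, hb⟩ | ⟨ha, hb⟩
      · obtain ⟨p₁', hp1, hrel1⟩ := hroot1.2.1 _ q₁' ha
        obtain ⟨p₂', hp2, hrel2⟩ := hroot2.2.1 _ q₂' hb
        refine ⟨.par Cs p₁' p₂', ?_, p₁', p₂', q₁', q₂', hrel1, hrel2, rfl, rfl⟩
        simp only [Tr]
        exact Or.inr (Or.inr ⟨True.intro, ch, hch, dd, p₁', p₂', Or.inl ⟨hp1, hp2⟩, rfl⟩)
      · obtain ⟨p₁', hp1, hrel1⟩ := hroot1.2.1 _ q₁' ha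
        obtain ⟨p₂', hp2, hrel2⟩ := hroot2.2.1 _ q₂' hb
        refine ⟨.par Cs p₁' p₂', ?_, p₁', p₂', q₁', q₂', hrel1, hrel2, rfl, rfl⟩
        simp only [Tr]
        exact Or.inr (Or.inr ⟨True.intro, ch, hch, dd, p₁', p₂', Or.inr ⟨hp1, hp2⟩, rfl⟩)
  · -- root condition: termination
    simp only [Proc.term]
    rw [hroot1.2.2, hroot2.2.2]

end TCPRev
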